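/- Let G be a finite group and R → S a faithfully flat G-Galois extension of commutative rings. Then the extension-of-scalars functor M ↦ S ⊗_R M from R-modules to S-modules with semilinear G-action is an equivalence of categories, with quasi-inverse N ↦ N^G. -/

import Mathlib

open scoped TensorProduct

/-- The `R`-submodule of `G`-fixed points of an `S`-module `M` with semilinear `G`-action. -/
def fixedSubmodule (R S : Type*) [CommRing R] [CommRing S] [Algebra R S]
    (G : Type*) [Group G] [MulSemiringAction G S] [SMulCommClass G R S]
    (M : Type*) [AddCommGroup M] [Module S M] [Module R M] [IsScalarTower R S M]
    [DistribMulAction G M]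
    (hsemi : ∀ (g : G) (s : S) (m : M), g • (s • m) = (g • s) • (g • m)) :
    Submodule R M where
  carrier := {m : M | ∀ g : G, g • m = m}
  add_mem' := fun ha hb g => by rw [smul_add, ha g, hb g]
  zero_mem' := fun g => smul_zero g
  smul_mem' := fun r m hm => by
    intro g
    have h1 : r • m = (algebraMap R S r) • m := (algebraMap_smul S r m).symm
    have h2 : g • (algebraMap R S r) = algebraMap R S r := by
      calc g • (algebraMap R S r) = g • (r • (1 : S)) := by
              rw [Algebra.algebraMap_eq_smul_one]
        _ = r • (g • (1 : S)) := smul_comm g r (1 : S)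
        _ = r • (1 : S) := by rw [smul_one]
        _ = algebraMap R S r := (Algebra.algebraMap_eq_smul_one r).symm
    rw [h1, hsemi, hm g, h2, ← h1]

section GaloisDescentAux
open Finset




variable {R S : Type*} [CommRing R] [CommRing S] [Algebra R S]
  (G : Type*) [Group G] [Finite G] [MulSemiringAction G S] [SMulCommClass G R S]

section
variable [Fintype G] [DecidableEq G]

/-- trace is G-fixed -/
lemma tr_fix (s : S) (g : G) : g • (∑ h : G, h • s) = ∑ h : G, h • s := by
  rw [Finset.smul_sum]
  exact Fintype.sum_equiv (Equiv.mulLeft g) _ _ (fun h => smul_smul g h s)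

lemma galois_aux
    (h1 : ∀ s : S, (∀ g : G, g • s = s) ↔ ∃ r : R, algebraMap R S r = s)
    (h2 : ∃ Φ : S ⊗[R] S →ₗ[R] (G → S),
      (∀ (s t : S) (g : G), Φ (s ⊗ₜ[R] t) g = s * g • t) ∧ Function.Bijective Φ)
    (h3 : Module.FaithfullyFlat R S) :
    ∃ (T : Finset (S × S)) (c : S),
      (∀ g : G, ∑ p ∈ T, p.1 * g • p.2 = if g = 1 then 1 else 0) ∧
      (∑ g : G, g • c = 1) := by
  classical
  obtain ⟨Φ, hΦ, Φbij⟩ := h2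
  obtain ⟨e, he⟩ := Φbij.2 (fun g => if g = 1 then 1 else 0)
  obtain ⟨T, hT⟩ := TensorProduct.exists_finset e
  have key : ∀ g : G, ∑ p ∈ T, p.1 * g • p.2 = if g = 1 then 1 else 0 := by
    intro g
    have h := congrFun he g
    rw [hT, map_sum] at h
    rw [← h, Finset.sum_apply]
    exact Finset.sum_congr rfl fun p _ => (hΦ p.1 p.2 g).symm
  -- choose R-elements for traces of the second components
  choose τ hτ using fun p : S × S => (h1 (∑ h : G, h • p.2)).mp (fun g => tr_fix G p.2 g)
  -- 1 = ∑ p, τ p • p.1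
  have one_eq : ∑ p ∈ T, τ p • p.1 = 1 := by
    have : ∑ p ∈ T, τ p • p.1 = ∑ p ∈ T, ∑ g : G, p.1 * g • p.2 := by
      refine Finset.sum_congr rfl fun p _ => ?_
      rw [Algebra.smul_def, hτ, mul_comm, Finset.mul_sum]
    rw [this, Finset.sum_comm]
    simp [key]
  -- the ideal generated by the τ p is ⊤
  have hI : (1 : R) ∈ Ideal.span (Set.range fun p : T => τ p) := by
    set I : Ideal R := Ideal.span (Set.range fun p : T => τ p) with hIdef
    have := (Module.FaithfullyFlat.iff_flat_and_ideal_smul_eq_top R S).mp h3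
    have htop : I • (⊤ : Submodule R S) = ⊤ := by
      have h1' : (1 : S) ∈ I • (⊤ : Submodule R S) := by
        rw [← one_eq]
        refine Submodule.sum_mem _ fun p hp => Submodule.smul_mem_smul ?_ trivial
        exact Ideal.subset_span ⟨⟨p, hp⟩, rfl⟩
      rw [eq_top_iff]
      intro s _
      have : s = s * 1 := (mul_one s).symm
      rw [this]
      refine Submodule.smul_induction_on h1' (fun r hr n hn => ?_) (fun a b ha hb => ?_)
      · rw [mul_smul_comm]
        exact Submodule.smul_mem_smul hr trivial
      · rw [mul_add]; exact Submodule.add_mem _ ha hb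
    rw [this.2 _ htop]
    trivial
  obtain ⟨a, ha⟩ := (Finsupp.mem_ideal_span_range_iff_exists_finsupp).mp hI
  refine ⟨T, a.sum fun j r => r • (j : S × S).2, key, ?_⟩
  have swap : ∑ g : G, g • (a.sum fun j r => r • (j : S × S).2)
      = a.sum fun j r => r • ∑ g : G, g • (j : S × S).2 := by
    simp only [Finsupp.sum, Finset.smul_sum]
    rw [Finset.sum_comm]
    refine Finset.sum_congr rfl fun j _ => ?_
    exact Finset.sum_congr rfl fun g _ => smul_comm g (a j) _
  rw [swap]
  have : (a.sum fun j r => r • ∑ g : G, g • (j : S × S).2)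
      = algebraMap R S (a.sum fun j r => r * τ j) := by
    rw [map_finsuppSum]
    refine Finsupp.sum_congr fun j _ => ?_
    rw [map_mul, hτ, ← Algebra.smul_def]
  rw [this, ha, map_one]

lemma part1_aux
    (h1 : ∀ s : S, (∀ g : G, g • s = s) ↔ ∃ r : R, algebraMap R S r = s)
    (h1' : Function.Injective (algebraMap R S))
    (c : S) (hc : ∑ g : G, g • c = 1)
    (N : Type*) [AddCommGroup N] [Module R N] :
    Function.Injective (fun n : N => ((1 : S) ⊗ₜ[R] n : S ⊗[R] N)) ∧
      ∀ x : S ⊗[R] N,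
        (∀ g : G, LinearMap.rTensor N (DistribMulAction.toLinearMap R S g) x = x) ↔
          ∃ n : N, (1 : S) ⊗ₜ[R] n = x := by
  classical
  choose Lf hLf using fun s : S => (h1 (∑ h : G, h • (c * s))).mp (fun g => tr_fix G (c*s) g)
  have hL1 : Lf 1 = 1 := by
    apply h1'; rw [hLf, map_one, mul_one, hc]
  have Ladd : ∀ s t, Lf (s + t) = Lf s + Lf t := by
    intro s t; apply h1'
    rw [map_add, hLf, hLf, hLf, mul_add, ← Finset.sum_add_distrib]
    exact Finset.sum_congr rfl fun g _ => smul_add g _ _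
  have Lsmul : ∀ (r : R) (s : S), Lf (r • s) = r * Lf s := by
    intro r s; apply h1'
    rw [hLf, map_mul, hLf, ← Algebra.smul_def, mul_smul_comm, Finset.smul_sum]
    exact Finset.sum_congr rfl fun g _ => smul_comm g r _
  let L : S →ₗ[R] R :=
    { toFun := Lf, map_add' := Ladd,
      map_smul' := fun r s => by simp [Lsmul, smul_eq_mul] }
  let nmap : S ⊗[R] N →ₗ[R] N :=
    (TensorProduct.lid R N).toLinearMap.comp (LinearMap.rTensor N L)
  have hnmap : ∀ (s : S) (n : N), nmap (s ⊗ₜ[R] n) = Lf s • n := by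
    intro s n
    simp [nmap, LinearMap.rTensor_tmul, TensorProduct.lid_tmul, L]
  have SL : ∀ (g : G) (s : S) (x : S ⊗[R] N),
      LinearMap.rTensor N (DistribMulAction.toLinearMap R S g) (s • x)
        = (g • s) • LinearMap.rTensor N (DistribMulAction.toLinearMap R S g) x := by
    intro g s x
    induction x using TensorProduct.induction_on with
    | zero => simp
    | tmul t n => simp [TensorProduct.smul_tmul', smul_mul', DistribMulAction.toLinearMap, DistribSMul.toLinearMap_apply]
    | add a b ha hb => simp [smul_add, ha, hb]
  have KI : ∀ x : S ⊗[R] N,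
      ∑ g : G, LinearMap.rTensor N (DistribMulAction.toLinearMap R S g) (c • x)
        = (1 : S) ⊗ₜ[R] nmap x := by
    intro x
    induction x using TensorProduct.induction_on with
    | zero => simp
    | tmul s n =>
        rw [hnmap]
        have step : ∀ g : G,
            LinearMap.rTensor N (DistribMulAction.toLinearMap R S g) (c • (s ⊗ₜ[R] n))
              = (g • (c * s)) ⊗ₜ[R] n := by
          intro g; simp [TensorProduct.smul_tmul', DistribMulAction.toLinearMap, DistribSMul.toLinearMap_apply]
        rw [Finset.sum_congr rfl fun g _ => step g, ← TensorProduct.sum_tmul, ← hLf,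
          Algebra.algebraMap_eq_smul_one, TensorProduct.smul_tmul]
    | add a b ha hb =>
        simp only [smul_add, map_add, Finset.sum_add_distrib, ha, hb,
          TensorProduct.tmul_add]
  constructor
  · intro n1 n2 h
    have := congrArg nmap h
    simpa [hnmap, hL1] using this
  · intro x
    constructor
    · intro hx
      have e1 : ∀ g : G,
          LinearMap.rTensor N (DistribMulAction.toLinearMap R S g) (c • x) = (g • c) • x :=
        fun g => by rw [SL, hx g]
      refine ⟨nmap x, ?_⟩
      rw [← KI x, Finset.sum_congr rfl fun g _ => e1 g, ← Finset.sum_smul, hc, one_smul]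
    · rintro ⟨n, rfl⟩ g
      simp [LinearMap.rTensor_tmul, DistribMulAction.toLinearMap, DistribSMul.toLinearMap_apply]

lemma part2_aux
    (h1 : ∀ s : S, (∀ g : G, g • s = s) ↔ ∃ r : R, algebraMap R S r = s)
    (T : Finset (S × S))
    (key : ∀ g : G, ∑ p ∈ T, p.1 * g • p.2 = if g = 1 then 1 else 0)
    (M : Type*) [AddCommGroup M] [Module S M] [Module R M] [IsScalarTower R S M]
    [DistribMulAction G M]
    (hsemi : ∀ (g : G) (s : S) (m : M), g • (s • m) = (g • s) • (g • m)) :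
    ∃ Ψ : S ⊗[R] (fixedSubmodule R S G M hsemi) →ₗ[R] M,
      (∀ (s : S) (m : fixedSubmodule R S G M hsemi), Ψ (s ⊗ₜ[R] m) = s • (m : M)) ∧
      Function.Bijective Ψ := by
  classical
  set F := fixedSubmodule R S G M hsemi with hF
  have memF : ∀ m : M, (∀ g : G, g • m = m) → m ∈ F := fun m h => h
  have Ffix : ∀ (m : F) (g : G), g • (m : M) = (m : M) := fun m g => m.2 g
  have algfix : ∀ (g : G) (r : R), g • (algebraMap R S r) = algebraMap R S r := fun g r => by
    rw [Algebra.algebraMap_eq_smul_one, smul_comm g r (1 : S), smul_one]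
  have hRsmul : ∀ (g : G) (r : R) (m : M), g • (r • m) = r • (g • m) := by
    intro g r m
    rw [← algebraMap_smul S r m, hsemi, algfix, algebraMap_smul]
  have smulRS : ∀ (r : R) (s : S) (m : M), s • (r • m) = r • (s • m) := by
    intro r s m
    rw [← algebraMap_smul S r m, ← mul_smul, mul_comm, mul_smul, algebraMap_smul]
  have trM_mem : ∀ m : M, (∑ g : G, g • m) ∈ F := by
    intro m
    refine memF _ fun g => ?_
    rw [Finset.smul_sum]
    exact Fintype.sum_equiv (Equiv.mulLeft g) _ _ (fun h => smul_smul g h m)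
  -- the counit Ψ
  let Ψ : S ⊗[R] F →ₗ[R] M := TensorProduct.lift
    (LinearMap.mk₂ R (fun s (m : F) => s • (m : M))
      (fun s t m => add_smul s t (m : M))
      (fun r s m => smul_assoc r s (m : M))
      (fun s m n => by
        show s • ((m + n : F) : M) = s • (m : M) + s • (n : M)
        rw [Submodule.coe_add, smul_add])
      (fun r s m => by
        show s • ((r • m : F) : M) = r • (s • (m : M))
        rw [SetLike.val_smul, smulRS]))
  have ΨP : ∀ (s : S) (m : F), Ψ (s ⊗ₜ[R] m) = s • (m : M) := fun s m => rfl
  -- the trace maps into F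
  let Pi : S × S → (M →ₗ[R] F) := fun p =>
    { toFun := fun m => ⟨∑ g : G, g • (p.2 • m), trM_mem _⟩
      map_add' := fun m n => Subtype.ext <| by
        simp [smul_add, Finset.sum_add_distrib]
      map_smul' := fun r m => Subtype.ext <| by
        have h : p.2 • (r • m) = r • (p.2 • m) := smulRS r p.2 m
        simp [h, hRsmul, Finset.smul_sum] }
  let ρ : M →ₗ[R] S ⊗[R] F := ∑ p ∈ T, (TensorProduct.mk R S F p.1).comp (Pi p)
  have hρ : ∀ m : M, ρ m = ∑ p ∈ T, p.1 ⊗ₜ[R] (Pi p m) := by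
    intro m
    simp [ρ, LinearMap.sum_apply]
  have ΨρEq : ∀ m : M, Ψ (ρ m) = m := by
    intro m
    rw [hρ, map_sum]
    have step : ∀ p : S × S, Ψ (p.1 ⊗ₜ[R] (Pi p m)) = ∑ g : G, (p.1 * g • p.2) • (g • m) := by
      intro p
      rw [ΨP]
      show p.1 • (∑ g : G, g • (p.2 • m)) = _
      rw [Finset.smul_sum]
      exact Finset.sum_congr rfl fun g _ => by rw [hsemi, ← mul_smul]
    rw [Finset.sum_congr rfl fun p _ => step p, Finset.sum_comm]
    have : ∀ g : G, ∑ p ∈ T, (p.1 * g • p.2) • (g • m)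
        = (if g = 1 then (1:S) else 0) • (g • m) := by
      intro g
      rw [← Finset.sum_smul, key g]
    rw [Finset.sum_congr rfl fun g _ => this g]
    simp [ite_smul]
  -- choice of R-coefficients
  choose σ hσ using fun u : S => (h1 (∑ g : G, g • u)).mp (fun g => tr_fix G u g)
  have ρΨEq : ∀ z : S ⊗[R] F, ρ (Ψ z) = z := by
    intro z
    induction z using TensorProduct.induction_on with
    | zero => simp
    | tmul s m =>
        rw [ΨP, hρ]
        have hPi : ∀ p : S × S, Pi p (s • (m : M)) = σ (p.2 * s) • m := by
          intro p
          refine Subtype.ext ?_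
          show (∑ g : G, g • (p.2 • s • (m : M))) = ((σ (p.2 * s) • m : F) : M)
          rw [SetLike.val_smul, ← algebraMap_smul S (σ (p.2 * s)) (m : M), hσ,
            Finset.sum_smul]
          refine Finset.sum_congr rfl fun g _ => ?_
          rw [← mul_smul, hsemi, Ffix]
        rw [Finset.sum_congr rfl fun p _ => by rw [hPi p]]
        have : ∀ p : S × S, p.1 ⊗ₜ[R] (σ (p.2 * s) • m) = (σ (p.2 * s) • p.1) ⊗ₜ[R] m :=
          fun p => (TensorProduct.smul_tmul _ _ _).symm
        rw [Finset.sum_congr rfl fun p _ => this p, ← TensorProduct.sum_tmul]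
        congr 1
        have : ∀ p : S × S, σ (p.2 * s) • p.1 = ∑ g : G, p.1 * (g • p.2 * g • s) := by
          intro p
          rw [Algebra.smul_def, hσ, Finset.sum_mul]
          exact Finset.sum_congr rfl fun g _ => by rw [smul_mul', mul_comm]
        rw [Finset.sum_congr rfl fun p _ => this p, Finset.sum_comm]
        have : ∀ g : G, ∑ p ∈ T, p.1 * (g • p.2 * g • s)
            = (if g = 1 then (1:S) else 0) * g • s := by
          intro g
          rw [Finset.sum_congr rfl fun p _ => (mul_assoc p.1 (g • p.2) (g • s)).symm,
            ← Finset.sum_mul, key g]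
        rw [Finset.sum_congr rfl fun g _ => this g]
        simp
    | add a b ha hb => rw [map_add, map_add, ha, hb]
  exact ⟨Ψ, ΨP, Function.LeftInverse.injective ρΨEq, fun m => ⟨ρ m, ΨρEq m⟩⟩

end
end GaloisDescentAux

/-- Classical Galois descent: for a finite group `G` and a faithfully flat `G`-Galois
extension `R → S` of commutative rings, extension of scalars `N ↦ S ⊗[R] N` is an
equivalence from `R`-modules to `S`-modules with semilinear `G`-action, with quasi-inverse
`M ↦ M^G`: the unit `N → (S ⊗[R] N)^G` and the counit `S ⊗[R] M^G → M` are bijective. -/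
theorem stmt17 {R S : Type*} [CommRing R] [CommRing S] [Algebra R S]
    (G : Type*) [Group G] [Finite G] [MulSemiringAction G S] [SMulCommClass G R S]
    (h1 : ∀ s : S, (∀ g : G, g • s = s) ↔ ∃ r : R, algebraMap R S r = s)
    (h1' : Function.Injective (algebraMap R S))
    (h2 : ∃ Φ : S ⊗[R] S →ₗ[R] (G → S),
      (∀ (s t : S) (g : G), Φ (s ⊗ₜ[R] t) g = s * g • t) ∧ Function.Bijective Φ)
    (h3 : Module.FaithfullyFlat R S) :
    (∀ (N : Type*) [AddCommGroup N] [Module R N],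
      Function.Injective (fun n : N => ((1 : S) ⊗ₜ[R] n : S ⊗[R] N)) ∧
      ∀ x : S ⊗[R] N,
        (∀ g : G, LinearMap.rTensor N (DistribMulAction.toLinearMap R S g) x = x) ↔
          ∃ n : N, (1 : S) ⊗ₜ[R] n = x) ∧
    (∀ (M : Type*) [AddCommGroup M] [Module S M] [Module R M] [IsScalarTower R S M]
        [DistribMulAction G M]
        (hsemi : ∀ (g : G) (s : S) (m : M), g • (s • m) = (g • s) • (g • m)),
      ∃ Ψ : S ⊗[R] (fixedSubmodule R S G M hsemi) →ₗ[R] M,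
        (∀ (s : S) (m : fixedSubmodule R S G M hsemi), Ψ (s ⊗ₜ[R] m) = s • (m : M)) ∧
        Function.Bijective Ψ) := by
  classical
  cases nonempty_fintype G
  obtain ⟨T, c, key, hc⟩ := galois_aux G h1 h2 h3
  exact ⟨fun N _ _ => part1_aux G h1 h1' c hc N,
    fun M _ _ _ _ _ hsemi => part2_aux G h1 T key M hsemi⟩
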